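/- For each B ∈ (B₁, B̄) and each A ∈ (A̲(B), Ā(B)], there exist unique points U(A,B) and u(A,B) satisfying x₁(B) < U(A,B) < x₂(B) < u(A,B) such that g_{A,B}(U(A,B)) = g_{A,B}(u(A,B)) = ℓ, g_{A,B}'(U(A,B)) > 0, g_{A,B}'(u(A,B)) < 0, and moreover g_{A,B}(x₁(B)) ≤ −k. -/

import Mathlib

open MeasureTheory Set Filter Topology

noncomputable def gfun (μ σ a : ℝ) (h : ℝ → ℝ) (A B x : ℝ) : ℝ :=
  A - B * Real.exp (-(2 * μ / σ ^ 2) * (x - a)) -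
    (2 * μ / σ ^ 2) / μ * ∫ y in a..x, h y * Real.exp (-(2 * μ / σ ^ 2) * (x - y))

noncomputable def F1 (μ σ a : ℝ) (h : ℝ → ℝ) (B x : ℝ) : ℝ :=
  B - 1 / μ * ∫ y in a..x, deriv h y * Real.exp ((2 * μ / σ ^ 2) * (y - a))

noncomputable def Bbar (μ σ a : ℝ) (h : ℝ → ℝ) : ℝ :=
  -(1 / μ) * ∫ y in Set.Iic a, deriv h y * Real.exp ((2 * μ / σ ^ 2) * (y - a))

section Aux

lemma aux_expc (l a : ℝ) : Continuous (fun y : ℝ => Real.exp (l*(y-a))) :=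
  Real.continuous_exp.comp (continuous_const.mul (continuous_id.sub continuous_const))

lemma aux_expD (l a y : ℝ) :
    HasDerivAt (fun y : ℝ => Real.exp (l*(y-a))) (l * Real.exp (l*(y-a))) y := by
  have h1 : HasDerivAt (fun y : ℝ => l*(y-a)) l y := by
    simpa using (((hasDerivAt_id y).sub_const a).const_mul l)
  simpa [mul_comm] using h1.exp

lemma exp_cancel (l a x : ℝ) :
    Real.exp (-(l*(x-a))) * Real.exp (l*(x-a)) = 1 := by
  rw [← Real.exp_add, neg_add_cancel, Real.exp_zero]

lemma aux_deriv_bound (h : ℝ → ℝ) (a : ℝ) (hconv : ConvexOn ℝ Set.univ h)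
    (hnonneg : ∀ x, 0 ≤ h x) (hC2 : ∀ x : ℝ, x ≠ a → ContDiffAt ℝ 2 h x)
    (c d y : ℝ) (hy : y ∈ Set.Icc c d) (hya : y ≠ a) :
    |deriv h y| ≤ max (h (d+1)) (h (c-1)) := by
  have hdiff : DifferentiableAt ℝ h y := (hC2 y hya).differentiableAt (by norm_num)
  have h1 : deriv h y ≤ slope h y (d+1) :=
    hconv.deriv_le_slope (Set.mem_univ y) (Set.mem_univ (d+1))
      (by linarith [hy.2]) hdiff
  have h2 : slope h (c-1) y ≤ deriv h y :=
    hconv.slope_le_deriv (Set.mem_univ (c-1)) (Set.mem_univ y)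
      (by linarith [hy.1]) hdiff
  rw [slope_def_field] at h1 h2
  have hyd : (1:ℝ) ≤ d + 1 - y := by linarith [hy.2]
  have hyc : (1:ℝ) ≤ y - (c - 1) := by linarith [hy.1]
  have hub : deriv h y ≤ h (d+1) := by
    refine h1.trans ?_
    rw [div_le_iff₀ (by linarith)]
    nlinarith [hnonneg (d+1), hnonneg y]
  have hlb : -(h (c-1)) ≤ deriv h y := by
    refine le_trans ?_ h2
    rw [le_div_iff₀ (by linarith)]
    nlinarith [hnonneg (c-1), hnonneg y]
  rw [abs_le]
  exact ⟨le_trans (neg_le_neg (le_max_right _ _)) hlb, hub.trans (le_max_left _ _)⟩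

lemma aux_intInt (h : ℝ → ℝ) (a : ℝ) (hconv : ConvexOn ℝ Set.univ h)
    (hnonneg : ∀ x, 0 ≤ h x) (hC2 : ∀ x : ℝ, x ≠ a → ContDiffAt ℝ 2 h x)
    (l : ℝ) (hl : 0 ≤ l) (c d : ℝ) :
    IntervalIntegrable (fun y => deriv h y * Real.exp (l*(y-a))) volume c d := by
  have key : ∀ c d : ℝ, c ≤ d →
      IntegrableOn (fun y => deriv h y * Real.exp (l*(y-a))) (Set.Icc c d) volume := by
    intro c d hcd
    have hmeas : AEStronglyMeasurable (fun y => deriv h y * Real.exp (l*(y-a)))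
        volume :=
      ((measurable_deriv h).mul ((aux_expc l a).measurable)).aestronglyMeasurable
    refine Measure.integrableOn_of_bounded (M := max (h (d+1)) (h (c-1)) * Real.exp (l*(d-a)))
      (by simp) hmeas ?_
    have hae : ∀ᵐ (y : ℝ) ∂(volume.restrict (Set.Icc c d)), y ≠ a := by
      refine ae_restrict_of_ae ?_
      rw [ae_iff]
      simpa using Real.volume_singleton
    filter_upwards [hae, ae_restrict_mem measurableSet_Icc] with y hya hy
    rw [Real.norm_eq_abs, abs_mul, abs_of_pos (Real.exp_pos _)]
    have h1 := aux_deriv_bound h a hconv hnonneg hC2 c d y hy hya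
    have h2 : Real.exp (l*(y-a)) ≤ Real.exp (l*(d-a)) := by
      apply Real.exp_le_exp.2
      have := hy.2
      nlinarith
    have h3 : (0:ℝ) ≤ max (h (d+1)) (h (c-1)) := le_trans (abs_nonneg _) h1
    exact mul_le_mul h1 h2 (Real.exp_pos _).le h3
  rcases le_total c d with hcd | hcd
  · exact (intervalIntegrable_iff_integrableOn_Icc_of_le hcd).2 (key c d hcd)
  · exact ((intervalIntegrable_iff_integrableOn_Icc_of_le hcd).2 (key d c hcd)).symm

lemma aux_hdc (h : ℝ → ℝ) (a : ℝ) (hC2 : ∀ x : ℝ, x ≠ a → ContDiffAt ℝ 2 h x)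
    (x : ℝ) (hx : x ≠ a) : ContinuousAt (deriv h) x := by
  obtain ⟨u, hu, hcd⟩ := (hC2 x hx).contDiffOn (le_refl 2) (by simp)
  obtain ⟨v, hvu, hv, hxv⟩ := mem_nhds_iff.1 hu
  have : ContinuousOn (deriv h) v :=
    ((hcd.mono hvu).continuousOn_deriv_of_isOpen hv (by norm_num))
  exact this.continuousAt (hv.mem_nhds hxv)

lemma aux_F1cont (μ σ a : ℝ) (h : ℝ → ℝ)
    (intInt : ∀ c d : ℝ, IntervalIntegrable
      (fun y => deriv h y * Real.exp ((2 * μ / σ ^ 2)*(y-a))) volume c d)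
    (B : ℝ) : Continuous (F1 μ σ a h B) := by
  unfold F1
  exact continuous_const.sub (continuous_const.mul
    (intervalIntegral.continuous_primitive (fun c d => intInt c d) a))

lemma aux_F1deriv (μ σ a : ℝ) (h : ℝ → ℝ)
    (intInt : ∀ c d : ℝ, IntervalIntegrable
      (fun y => deriv h y * Real.exp ((2 * μ / σ ^ 2)*(y-a))) volume c d)
    (hdc : ∀ x : ℝ, x ≠ a → ContinuousAt (deriv h) x)
    (B x : ℝ) (hx : x ≠ a) :
    HasDerivAt (F1 μ σ a h B)
      (-(1/μ * (deriv h x * Real.exp ((2 * μ / σ ^ 2)*(x-a))))) x := by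
  have hmeas : StronglyMeasurableAtFilter
      (fun y => deriv h y * Real.exp ((2 * μ / σ ^ 2)*(y-a))) (𝓝 x) volume :=
    (((measurable_deriv h).mul
      ((aux_expc (2 * μ / σ ^ 2) a).measurable)).stronglyMeasurable).stronglyMeasurableAtFilter
  have hca : ContinuousAt (fun y => deriv h y * Real.exp ((2 * μ / σ ^ 2)*(y-a))) x :=
    (hdc x hx).mul (aux_expc (2 * μ / σ ^ 2) a).continuousAt
  have H := intervalIntegral.integral_hasDerivAt_right (intInt a x) hmeas hca
  exact (H.const_mul (1/μ)).const_sub B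

lemma aux_key (μ σ a : ℝ) (h : ℝ → ℝ)
    (hcont : Continuous h) (ha : h a = 0)
    (hC2 : ∀ x : ℝ, x ≠ a → ContDiffAt ℝ 2 h x)
    (intInt : ∀ c d : ℝ, IntervalIntegrable
      (fun y => deriv h y * Real.exp ((2 * μ / σ ^ 2)*(y-a))) volume c d)
    (x : ℝ) :
    (2 * μ / σ ^ 2) * (∫ y in a..x, h y * Real.exp ((2 * μ / σ ^ 2)*(y-a)))
      + ∫ y in a..x, deriv h y * Real.exp ((2 * μ / σ ^ 2)*(y-a))
      = h x * Real.exp ((2 * μ / σ ^ 2)*(x-a)) := by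
  have hE := aux_expD (2 * μ / σ ^ 2) a
  have hEc := aux_expc (2 * μ / σ ^ 2) a
  have hhEc : Continuous (fun y => h y * Real.exp ((2 * μ / σ ^ 2)*(y-a))) := hcont.mul hEc
  have hderiv : ∀ y ∈ Set.Ioo (min a x) (max a x),
      HasDerivWithinAt (fun y => h y * Real.exp ((2 * μ / σ ^ 2)*(y-a)))
        (deriv h y * Real.exp ((2 * μ / σ ^ 2)*(y-a))
          + (2 * μ / σ ^ 2) * (h y * Real.exp ((2 * μ / σ ^ 2)*(y-a)))) (Set.Ioi y) y := by
    intro y hy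
    have hya : y ≠ a := by
      rcases le_or_gt a x with hax | hax
      · simp only [min_eq_left hax, max_eq_right hax] at hy
        exact ne_of_gt hy.1
      · simp only [min_eq_right hax.le, max_eq_left hax.le] at hy
        exact ne_of_lt hy.2
    have hd : HasDerivAt h (deriv h y) y :=
      (((hC2 y hya).differentiableAt (by norm_num))).hasDerivAt
    refine HasDerivAt.hasDerivWithinAt ?_
    have := hd.mul (hE y)
    exact this.congr_deriv (by ring)
  have hint : IntervalIntegrable
      (fun y => deriv h y * Real.exp ((2 * μ / σ ^ 2)*(y-a))
        + (2 * μ / σ ^ 2) * (h y * Real.exp ((2 * μ / σ ^ 2)*(y-a)))) volume a x :=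
    (intInt a x).add ((continuous_const.mul hhEc).intervalIntegrable a x)
  have H := intervalIntegral.integral_eq_sub_of_hasDeriv_right
    hhEc.continuousOn hderiv hint
  rw [intervalIntegral.integral_add (g := fun y => (2 * μ / σ ^ 2) * (h y * Real.exp ((2 * μ / σ ^ 2)*(y-a)))) (intInt a x)
    ((continuous_const.mul hhEc).intervalIntegrable a x),
    intervalIntegral.integral_const_mul, ha] at H
  simp only [zero_mul, sub_zero] at H
  linarith [H]

lemma aux_rw (μ σ a : ℝ) (h : ℝ → ℝ) (A B x : ℝ) :
    gfun μ σ a h A B x = A - Real.exp (-((2 * μ / σ ^ 2)*(x-a))) *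
      (B + (2 * μ / σ ^ 2) / μ * ∫ y in a..x, h y * Real.exp ((2 * μ / σ ^ 2)*(y-a))) := by
  unfold gfun
  have hcongr : (∫ y in a..x, h y * Real.exp (-(2 * μ / σ ^ 2) * (x - y)))
      = Real.exp (-((2 * μ / σ ^ 2)*(x-a))) * ∫ y in a..x, h y * Real.exp ((2 * μ / σ ^ 2)*(y-a)) := by
    rw [← intervalIntegral.integral_const_mul]
    apply intervalIntegral.integral_congr
    intro y _
    simp only []
    have : Real.exp (-(2 * μ / σ ^ 2) * (x - y))
        = Real.exp (-(2 * μ / σ ^ 2 * (x - a))) * Real.exp (2 * μ / σ ^ 2 * (y - a)) := by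
      rw [← Real.exp_add]; ring_nf
    rw [this]; ring
  rw [hcongr]
  simp only [neg_mul]
  set E := Real.exp (-(2 * μ / σ ^ 2 * (x - a))) with hE
  set I := ∫ y in a..x, h y * Real.exp (2 * μ / σ ^ 2 * (y - a)) with hI
  ring

lemma aux_ident (μ σ a : ℝ) (h : ℝ → ℝ)
    (hcont : Continuous h) (ha : h a = 0)
    (hC2 : ∀ x : ℝ, x ≠ a → ContDiffAt ℝ 2 h x)
    (intInt : ∀ c d : ℝ, IntervalIntegrable
      (fun y => deriv h y * Real.exp ((2 * μ / σ ^ 2)*(y-a))) volume c d)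
    (A B x : ℝ) :
    gfun μ σ a h A B x = A - h x / μ
      - Real.exp (-((2 * μ / σ ^ 2)*(x-a))) * F1 μ σ a h B x := by
  rw [aux_rw]
  have hkey := aux_key μ σ a h hcont ha hC2 intInt x
  unfold F1
  set l := 2 * μ / σ ^ 2 with hldef
  set I := ∫ y in a..x, h y * Real.exp (l*(y-a)) with hI
  set J := ∫ y in a..x, deriv h y * Real.exp (l*(y-a)) with hJ
  have hcc := exp_cancel l a x
  linear_combination (-(Real.exp (-(l*(x-a)))/μ)) * hkey - (h x/μ) * hcc

lemma aux_gderiv (μ σ a : ℝ) (h : ℝ → ℝ)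
    (hcont : Continuous h) (ha : h a = 0)
    (hC2 : ∀ x : ℝ, x ≠ a → ContDiffAt ℝ 2 h x)
    (intInt : ∀ c d : ℝ, IntervalIntegrable
      (fun y => deriv h y * Real.exp ((2 * μ / σ ^ 2)*(y-a))) volume c d)
    (A B x : ℝ) :
    HasDerivAt (gfun μ σ a h A B)
      ((2 * μ / σ ^ 2) * Real.exp (-((2 * μ / σ ^ 2)*(x-a))) * F1 μ σ a h B x) x := by
  have hfe : gfun μ σ a h A B = fun x => A - Real.exp (-((2 * μ / σ ^ 2)*(x-a))) *
      (B + (2 * μ / σ ^ 2) / μ * ∫ y in a..x, h y * Real.exp ((2 * μ / σ ^ 2)*(y-a))) :=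
    funext (aux_rw μ σ a h A B)
  rw [hfe]
  set l := 2 * μ / σ ^ 2 with hldef
  have hEm : HasDerivAt (fun x : ℝ => Real.exp (-(l*(x-a)))) (-l * Real.exp (-(l*(x-a)))) x := by
    have h1 : HasDerivAt (fun x : ℝ => -(l*(x-a))) (-l) x := by
      have h0 : HasDerivAt (fun x : ℝ => l*(x-a)) l x := by
        simpa using ((hasDerivAt_id x).sub_const a).const_mul l
      exact h0.neg
    simpa [mul_comm] using h1.exp
  have hmeasI : StronglyMeasurableAtFilter
      (fun y => h y * Real.exp (l*(y-a))) (𝓝 x) volume :=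
    ((hcont.mul (aux_expc l a)).stronglyMeasurable).stronglyMeasurableAtFilter
  have hI : HasDerivAt (fun x => ∫ y in a..x, h y * Real.exp (l*(y-a)))
      (h x * Real.exp (l*(x-a))) x :=
    intervalIntegral.integral_hasDerivAt_right
      ((hcont.mul (aux_expc l a)).intervalIntegrable a x) hmeasI
      ((hcont.mul (aux_expc l a)).continuousAt)
  have hprod := hEm.mul ((hI.const_mul (l/μ)).const_add B)
  have H := hprod.const_sub A
  refine H.congr_deriv (Eq.symm ?_)
  have hkey := aux_key μ σ a h hcont ha hC2 intInt x
  rw [← hldef] at hkey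
  unfold F1
  rw [← hldef]
  set I := ∫ y in a..x, h y * Real.exp (l*(y-a)) with hIdef
  set J := ∫ y in a..x, deriv h y * Real.exp (l*(y-a)) with hJdef
  linear_combination (-(l*Real.exp (-(l*(x-a)))/μ)) * hkey

lemma aux_gX (μ σ a : ℝ) (h : ℝ → ℝ) (hμ : 0 < μ) (hσ : 0 < σ)
    (hcont : Continuous h) (hnonneg : ∀ x, 0 ≤ h x)
    (hmono : MonotoneOn h (Set.Ici a)) (A B ℓ t : ℝ) (hB : 0 < B) (hta : a ≤ t)
    (hC : μ * (A - ℓ) / (1 - Real.exp (-(2*μ/σ^2))) < h t) :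
    gfun μ σ a h A B (t+1) < ℓ := by
  set l := 2 * μ / σ ^ 2 with hldef
  have hl0 : 0 < l := by rw [hldef]; positivity
  have he1 : Real.exp (-l) < 1 := Real.exp_lt_one_iff.2 (by linarith)
  set X := t + 1 with hX
  have htX : t < X := by rw [hX]; linarith
  have hEc : Continuous (fun y : ℝ => Real.exp (-l * (X - y))) :=
    Real.continuous_exp.comp (continuous_const.mul (continuous_const.sub continuous_id))
  have hIc : Continuous (fun y : ℝ => h y * Real.exp (-l * (X - y))) := hcont.mul hEc
  have hsplit : (∫ y in a..X, h y * Real.exp (-l * (X - y)))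
      = (∫ y in a..t, h y * Real.exp (-l * (X - y)))
        + ∫ y in t..X, h y * Real.exp (-l * (X - y)) :=
    (intervalIntegral.integral_add_adjacent_intervals
      (hIc.intervalIntegrable a t) (hIc.intervalIntegrable t X)).symm
  have hI1 : (0:ℝ) ≤ ∫ y in a..t, h y * Real.exp (-l * (X - y)) :=
    intervalIntegral.integral_nonneg hta
      (fun y _ => mul_nonneg (hnonneg y) (Real.exp_pos _).le)
  have hExpInt : (∫ y in t..X, Real.exp (-l * (X - y))) = (1 - Real.exp (-l)) / l := by
    have hD : ∀ y ∈ Set.uIcc t X, HasDerivAt (fun y => Real.exp (-l * (X - y)) / l)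
        (Real.exp (-l * (X - y))) y := by
      intro y _
      have h1 : HasDerivAt (fun y : ℝ => -l * (X - y)) l y := by
        have := ((hasDerivAt_id y).const_sub X).const_mul (-l)
        simpa using this
      have h2 := h1.exp.div_const l
      simpa [mul_div_cancel_right₀ _ (ne_of_gt hl0)] using h2
    rw [intervalIntegral.integral_eq_sub_of_hasDerivAt hD (hEc.intervalIntegrable t X)]
    have e1 : -l * (X - X) = 0 := by ring
    have e2 : -l * (X - t) = -l := by rw [hX]; ring
    rw [e1, e2, Real.exp_zero, sub_div]
  have hI2 : h t * ((1 - Real.exp (-l)) / l) ≤ ∫ y in t..X, h y * Real.exp (-l * (X - y)) := by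
    have hmle : (∫ y in t..X, h t * Real.exp (-l * (X - y)))
        ≤ ∫ y in t..X, h y * Real.exp (-l * (X - y)) := by
      apply intervalIntegral.integral_mono_on htX.le
        ((continuous_const.mul hEc).intervalIntegrable t X)
        (hIc.intervalIntegrable t X)
      intro y hy
      have hty : h t ≤ h y := hmono (Set.mem_Ici.2 hta) (Set.mem_Ici.2 (hta.trans hy.1)) hy.1
      exact mul_le_mul_of_nonneg_right hty (Real.exp_pos _).le
    rw [intervalIntegral.integral_const_mul, hExpInt] at hmle
    exact hmle
  have hBe : 0 < B * Real.exp (-l * (X - a)) := mul_pos hB (Real.exp_pos _)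
  have hfinal : A - (l / μ) * ((∫ y in a..X, h y * Real.exp (-l * (X - y)))) < ℓ := by
    have h1 : h t * ((1 - Real.exp (-l)) / l) ≤ ∫ y in a..X, h y * Real.exp (-l * (X - y)) := by
      rw [hsplit]; linarith
    have hlμ : 0 < l / μ := div_pos hl0 hμ
    have h2 : (l / μ) * (h t * ((1 - Real.exp (-l)) / l))
        ≤ (l / μ) * ∫ y in a..X, h y * Real.exp (-l * (X - y)) :=
      mul_le_mul_of_nonneg_left h1 hlμ.le
    have h3 : (l / μ) * (h t * ((1 - Real.exp (-l)) / l)) = h t * (1 - Real.exp (-l)) / μ := by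
      field_simp
    have h4 : A - ℓ < h t * (1 - Real.exp (-l)) / μ := by
      rw [div_lt_iff₀ (by linarith : 0 < 1 - Real.exp (-l))] at hC
      rw [lt_div_iff₀ hμ]
      nlinarith
    linarith
  show A - B * Real.exp (-l * (X - a)) - l / μ * (∫ y in a..X, h y * Real.exp (-l * (X - y))) < ℓ
  linarith

end Aux

theorem stmt9 (μ σ a : ℝ) (h : ℝ → ℝ)
    (hμ : 0 < μ) (hσ : 0 < σ)
    (hconv : ConvexOn ℝ Set.univ h)
    (hcont : Continuous h)
    (hnonneg : ∀ x, 0 ≤ h x)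
    (ha : h a = 0)
    (hC2 : ∀ x : ℝ, x ≠ a → ContDiffAt ℝ 2 h x)
    (hneg : ∀ x, x < a → deriv h x < 0)
    (hpos : ∀ x, a < x → 0 < deriv h x)
    (hint : IntegrableOn (fun y => |deriv h y| * Real.exp ((2 * μ / σ ^ 2) * (y - a))) (Set.Iic a))
    (x1 x2 : ℝ → ℝ)
    (hx1 : ∀ B ∈ Set.Ioo 0 (Bbar μ σ a h), x1 B < a ∧ F1 μ σ a h B (x1 B) = 0)
    (hx2 : ∀ B : ℝ, 0 < B → a < x2 B ∧ F1 μ σ a h B (x2 B) = 0)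
    (k ℓ : ℝ) (hk : 0 < k) (hl : 0 < ℓ) (B₁ : ℝ)
    (hB₁ : B₁ ∈ Set.Ioo 0 (Bbar μ σ a h) ∧
      gfun μ σ a h 0 B₁ (x2 B₁) - gfun μ σ a h 0 B₁ (x1 B₁) = k + ℓ)
    :
    ∀ B ∈ Set.Ioo B₁ (Bbar μ σ a h),
      ∀ A ∈ Set.Ioc (h (x2 B) / μ + ℓ) (h (x1 B) / μ - k),
        gfun μ σ a h A B (x1 B) ≤ -k ∧
        ∃ Uv uv : ℝ,
          (x1 B < Uv ∧ Uv < x2 B ∧ x2 B < uv ∧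
           gfun μ σ a h A B Uv = ℓ ∧ gfun μ σ a h A B uv = ℓ ∧
           0 < deriv (gfun μ σ a h A B) Uv ∧ deriv (gfun μ σ a h A B) uv < 0) ∧
          ∀ Uv₀ uv₀ : ℝ,
            (x1 B < Uv₀ ∧ Uv₀ < x2 B ∧ x2 B < uv₀ ∧
             gfun μ σ a h A B Uv₀ = ℓ ∧ gfun μ σ a h A B uv₀ = ℓ ∧
             0 < deriv (gfun μ σ a h A B) Uv₀ ∧ deriv (gfun μ σ a h A B) uv₀ < 0) →
            Uv₀ = Uv ∧ uv₀ = uv := by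
  have hl0 : 0 < 2 * μ / σ ^ 2 := by positivity
  have hdc := aux_hdc h a hC2
  have intInt := aux_intInt h a hconv hnonneg hC2 (2 * μ / σ ^ 2) hl0.le
  intro B hB A hA
  have hB0 : 0 < B := lt_trans hB₁.1.1 hB.1
  obtain ⟨hx1a, hF1x1⟩ := hx1 B ⟨hB0, hB.2⟩
  obtain ⟨hx2a, hF1x2⟩ := hx2 B hB0
  have hx1x2 : x1 B < x2 B := hx1a.trans hx2a
  -- F1 sign facts
  have F1c : Continuous (F1 μ σ a h B) := aux_F1cont μ σ a h intInt B
  have F1mono : StrictMonoOn (F1 μ σ a h B) (Set.Iic a) := by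
    apply strictMonoOn_of_deriv_pos (convex_Iic a) F1c.continuousOn
    intro x hx
    rw [interior_Iic] at hx
    rw [(aux_F1deriv μ σ a h intInt hdc B x (ne_of_lt hx)).deriv]
    have h1 := hneg x hx
    have h2 := Real.exp_pos ((2 * μ / σ ^ 2) * (x - a))
    have h3 : 0 < 1/μ := by positivity
    nlinarith [mul_pos (mul_pos h3 (neg_pos.2 h1)) h2]
  have F1anti : StrictAntiOn (F1 μ σ a h B) (Set.Ici a) := by
    apply strictAntiOn_of_deriv_neg (convex_Ici a) F1c.continuousOn
    intro x hx
    rw [interior_Ici] at hx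
    rw [(aux_F1deriv μ σ a h intInt hdc B x (ne_of_gt hx)).deriv]
    have h1 := hpos x hx
    have h2 := Real.exp_pos ((2 * μ / σ ^ 2) * (x - a))
    have h3 : 0 < 1/μ := by positivity
    nlinarith [mul_pos (mul_pos h3 h1) h2]
  have F1pos : ∀ x ∈ Set.Ioo (x1 B) (x2 B), 0 < F1 μ σ a h B x := by
    intro x hx
    rcases le_or_gt x a with hxa | hxa
    · have := F1mono (Set.mem_Iic.2 hx1a.le) (Set.mem_Iic.2 hxa) hx.1
      rw [hF1x1] at this
      exact this
    · have := F1anti (Set.mem_Ici.2 hxa.le) (Set.mem_Ici.2 hx2a.le) hx.2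
      rw [hF1x2] at this
      exact this
  have F1neg : ∀ x, x2 B < x → F1 μ σ a h B x < 0 := by
    intro x hx
    have := F1anti (Set.mem_Ici.2 hx2a.le) (Set.mem_Ici.2 (hx2a.le.trans hx.le)) hx
    rw [hF1x2] at this
    exact this
  -- g facts
  have gD : ∀ x : ℝ, HasDerivAt (gfun μ σ a h A B)
      ((2 * μ / σ ^ 2) * Real.exp (-((2 * μ / σ ^ 2)*(x-a))) * F1 μ σ a h B x) x :=
    fun x => aux_gderiv μ σ a h hcont ha hC2 intInt A B x
  have gc : Continuous (gfun μ σ a h A B) := by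
    rw [continuous_iff_continuousAt]
    exact fun x => (gD x).continuousAt
  have gmono : StrictMonoOn (gfun μ σ a h A B) (Set.Icc (x1 B) (x2 B)) := by
    apply strictMonoOn_of_deriv_pos (convex_Icc _ _) gc.continuousOn
    intro x hx
    rw [interior_Icc] at hx
    rw [(gD x).deriv]
    exact mul_pos (mul_pos hl0 (Real.exp_pos _)) (F1pos x hx)
  have ganti : StrictAntiOn (gfun μ σ a h A B) (Set.Ici (x2 B)) := by
    apply strictAntiOn_of_deriv_neg (convex_Ici _) gc.continuousOn
    intro x hx
    rw [interior_Ici] at hx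
    rw [(gD x).deriv]
    exact mul_neg_of_pos_of_neg (mul_pos hl0 (Real.exp_pos _)) (F1neg x hx)
  -- values at x1, x2
  have gx1 : gfun μ σ a h A B (x1 B) = A - h (x1 B) / μ := by
    rw [aux_ident μ σ a h hcont ha hC2 intInt, hF1x1]
    ring
  have gx2 : gfun μ σ a h A B (x2 B) = A - h (x2 B) / μ := by
    rw [aux_ident μ σ a h hcont ha hC2 intInt, hF1x2]
    ring
  have hconcl1 : gfun μ σ a h A B (x1 B) ≤ -k := by
    rw [gx1]
    have := hA.2
    linarith
  have hgx2l : ℓ < gfun μ σ a h A B (x2 B) := by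
    rw [gx2]
    have := hA.1
    linarith
  refine ⟨hconcl1, ?_⟩
  -- existence of U
  have hUex : ∃ U ∈ Set.Ioo (x1 B) (x2 B), gfun μ σ a h A B U = ℓ := by
    have hsub := intermediate_value_Ioo hx1x2.le gc.continuousOn
    have hmem : ℓ ∈ Set.Ioo (gfun μ σ a h A B (x1 B)) (gfun μ σ a h A B (x2 B)) :=
      ⟨lt_of_le_of_lt hconcl1 (by linarith), hgx2l⟩
    obtain ⟨U, hU1, hU2⟩ := hsub hmem
    exact ⟨U, hU1, hU2⟩
  obtain ⟨U, hUmem, hUeq⟩ := hUex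
  -- monotone h on Ici a and growth
  have hmonoh : StrictMonoOn h (Set.Ici a) := by
    apply strictMonoOn_of_deriv_pos (convex_Ici a) hcont.continuousOn
    intro x hx
    rw [interior_Ici] at hx
    exact hpos x hx
  have hs : 0 < h (x2 B + 1) - h (x2 B) :=
    sub_pos.2 (hmonoh (Set.mem_Ici.2 hx2a.le) (Set.mem_Ici.2 (by linarith)) (lt_add_one _))
  set s : ℝ := h (x2 B + 1) - h (x2 B) with hsdef
  set C : ℝ := μ * (A - ℓ) / (1 - Real.exp (-(2*μ/σ^2))) with hCdef
  set t : ℝ := max (max (x2 B + 1) a) (x2 B + (C - h (x2 B) + 1)/s) with htdef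
  have ht1 : x2 B + 1 ≤ t := le_trans (le_max_left _ _) (le_max_left _ _)
  have hta : a ≤ t := le_trans (le_max_right _ _) (le_max_left _ _)
  have ht2 : x2 B + (C - h (x2 B) + 1)/s ≤ t := le_max_right _ _
  have hht : C < h t := by
    have hslope := hconv.secant_mono (Set.mem_univ (x2 B)) (Set.mem_univ (x2 B + 1))
      (Set.mem_univ t) (by linarith : x2 B + 1 ≠ x2 B) (by linarith : t ≠ x2 B)
      (by linarith : x2 B + 1 ≤ t)
    have htx2 : 0 < t - x2 B := by linarith
    have hsl2 : s ≤ (h t - h (x2 B)) / (t - x2 B) := by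
      have : (h (x2 B + 1) - h (x2 B)) / (x2 B + 1 - x2 B) = s := by
        rw [hsdef]; norm_num
      rw [← this]
      exact hslope
    rw [le_div_iff₀ htx2] at hsl2
    have h5 : C - h (x2 B) + 1 ≤ s * (t - x2 B) := by
      have h6 : (C - h (x2 B) + 1)/s ≤ t - x2 B := by linarith
      rw [div_le_iff₀ hs] at h6
      nlinarith
    linarith
  -- existence of u
  have hgX : gfun μ σ a h A B (t+1) < ℓ :=
    aux_gX μ σ a h hμ hσ hcont hnonneg hmonoh.monotoneOn A B ℓ t hB0 hta hht
  have hx2X : x2 B < t + 1 := by linarith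
  have huex : ∃ u ∈ Set.Ioo (x2 B) (t+1), gfun μ σ a h A B u = ℓ := by
    have hsub := intermediate_value_Ioo' hx2X.le gc.continuousOn
    have hmem : ℓ ∈ Set.Ioo (gfun μ σ a h A B (t+1)) (gfun μ σ a h A B (x2 B)) :=
      ⟨hgX, hgx2l⟩
    obtain ⟨u, hu1, hu2⟩ := hsub hmem
    exact ⟨u, hu1, hu2⟩
  obtain ⟨u, humem, hueq⟩ := huex
  have hUder : 0 < deriv (gfun μ σ a h A B) U := by
    rw [(gD U).deriv]
    exact mul_pos (mul_pos hl0 (Real.exp_pos _)) (F1pos U hUmem)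
  have huder : deriv (gfun μ σ a h A B) u < 0 := by
    rw [(gD u).deriv]
    exact mul_neg_of_pos_of_neg (mul_pos hl0 (Real.exp_pos _)) (F1neg u humem.1)
  refine ⟨U, u, ⟨hUmem.1, hUmem.2, humem.1, hUeq, hueq, hUder, huder⟩, ?_⟩
  rintro Uv₀ uv₀ ⟨p1, p2, p3, p4, p5, _, _⟩
  constructor
  · exact gmono.injOn (Set.mem_Icc.2 ⟨p1.le, p2.le⟩)
      (Set.mem_Icc.2 ⟨hUmem.1.le, hUmem.2.le⟩) (p4.trans hUeq.symm)
  · exact ganti.injOn (Set.mem_Ici.2 p3.le) (Set.mem_Ici.2 humem.1.le) (p5.trans hueq.symm)
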